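/- Correctness of the generalized (n+1)-parameter signature: let p, q be primes with q ∣ p−1, α of order q mod p, x the secret key with y = α^x mod p. Choose k₁,…,kₙ with rᵢ = α^{kᵢ} mod p for 1 ≤ i ≤ n−1, rₙ = (α^{kₙ} mod p) mod q, and r_{n+1} = kₙ^{-1}(h + x·r₁ + Σ_{i=1}^{n−1} kᵢ·r_{i+1}) mod q, assuming kₙ and r_{n+1} are invertible mod q. Then ((α^{h·r_{n+1}^{-1}} · y^{r₁·r_{n+1}^{-1}} · Π_{i=1}^{n−1} rᵢ^{r_{i+1}·r_{n+1}^{-1}}) mod p) mod q = rₙ, exponents reduced mod q. -/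

import Mathlib

private lemma gsc_ne_zero {p q : ℕ} [Fact p.Prime] [Fact q.Prime] {α : ZMod p}
    (hα : orderOf α = q) : α ≠ 0 := by
  intro h0
  have h1 : α ^ q = 1 := by rw [← hα]; exact pow_orderOf_eq_one _
  rw [h0, zero_pow (Nat.Prime.ne_zero Fact.out)] at h1
  exact zero_ne_one h1

private lemma gsc_pow_mod {p q : ℕ} [Fact p.Prime] {α : ZMod p}
    (hα : orderOf α = q) (m : ℕ) : α ^ (m % q) = α ^ m := by
  have := pow_mod_orderOf α m
  rwa [hα] at this

private lemma gsc_e_add {p q : ℕ} [Fact p.Prime] [Fact q.Prime] {α : ZMod p}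
    (hα : orderOf α = q) (a b : ZMod q) : α ^ a.val * α ^ b.val = α ^ (a + b).val := by
  rw [← pow_add, ZMod.val_add, gsc_pow_mod hα]

private lemma gsc_e_int {p q : ℕ} [Fact p.Prime] [Fact q.Prime] {α : ZMod p}
    (hα : orderOf α = q) (z : ℤ) : α ^ z = α ^ ((z : ZMod q)).val := by
  have ha := gsc_ne_zero hα
  have hq1 : α ^ (q : ℤ) = 1 := by
    rw [zpow_natCast, ← hα]; exact pow_orderOf_eq_one _
  have h2 : α ^ z = α ^ (z % q) := by
    conv_lhs => rw [← Int.mul_ediv_add_emod z q]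
    have h4 : (α ^ (z / q : ℤ)) ^ (q:ℤ) = (α ^ (q:ℤ)) ^ (z / q : ℤ) := by
      rw [← zpow_mul, ← zpow_mul, mul_comm]
    rw [zpow_add₀ ha, mul_comm (q:ℤ), zpow_mul, h4, hq1, one_zpow, one_mul]
  have h3 : ((z : ZMod q)).val = (z % q).toNat := by
    have := ZMod.val_intCast (n := q) z
    omega
  rw [h2, h3, ← zpow_natCast α,
    Int.toNat_of_nonneg (Int.emod_nonneg z (by exact_mod_cast (Fact.out : q.Prime).ne_zero))]

private lemma gsc_e_mulpow {p q : ℕ} [Fact p.Prime] [Fact q.Prime] {α : ZMod p}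
    (hα : orderOf α = q) (a b : ZMod q) : (α ^ a.val) ^ b.val = α ^ (a * b).val := by
  rw [← pow_mul, ZMod.val_mul, gsc_pow_mod hα]

private lemma gsc_e_sum {p q : ℕ} [Fact p.Prime] [Fact q.Prime] {α : ZMod p}
    (hα : orderOf α = q) (s : Finset ℕ) (f : ℕ → ZMod q) :
    ∏ i ∈ s, α ^ (f i).val = α ^ (∑ i ∈ s, f i).val := by
  classical
  induction s using Finset.induction with
  | empty => simp
  | insert _ _ h ih =>
      rw [Finset.prod_insert h, Finset.sum_insert h, ih, gsc_e_add hα]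

theorem generalized_scheme_correct (p q : ℕ) [Fact p.Prime] [Fact q.Prime]
    (hdvd : q ∣ p - 1) (α : ZMod p) (hα : orderOf α = q)
    (n : ℕ) (hn : 2 ≤ n)
    (x h : ℤ) (y : ZMod p) (hy : y = α ^ x)
    (k : ℕ → ℤ)
    (rp : ℕ → ZMod p) (hrp : ∀ i, 1 ≤ i → i ≤ n - 1 → rp i = α ^ k i)
    (rq : ℕ → ZMod q) (hrq : ∀ i, rq i = ((rp i).val : ZMod q))
    (hrn : rp n = α ^ k n)
    (hkn : ((k n : ZMod q)) ≠ 0)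
    (rlast : ZMod q)
    (hrlast : rlast = ((k n : ZMod q))⁻¹ *
      ((h : ZMod q) + (x : ZMod q) * rq 1 +
        ∑ i ∈ Finset.Icc 1 (n - 1), (k i : ZMod q) * rq (i + 1)))
    (hrlast0 : rlast ≠ 0) :
    (((α ^ ((h : ZMod q) * rlast⁻¹).val * y ^ (rq 1 * rlast⁻¹).val *
        ∏ i ∈ Finset.Icc 1 (n - 1), (rp i) ^ (rq (i + 1) * rlast⁻¹).val : ZMod p)).val
      : ZMod q) = rq n := by
  set t := rlast⁻¹ with ht
  -- rewrite y factor
  have hy' : y ^ (rq 1 * t).val = α ^ ((x : ZMod q) * (rq 1 * t)).val := by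
    rw [hy, gsc_e_int hα, gsc_e_mulpow hα]
  -- rewrite the product factor
  have hprod : ∏ i ∈ Finset.Icc 1 (n - 1), (rp i) ^ (rq (i + 1) * t).val
      = α ^ (∑ i ∈ Finset.Icc 1 (n - 1), (k i : ZMod q) * (rq (i + 1) * t)).val := by
    rw [← gsc_e_sum hα]
    apply Finset.prod_congr rfl
    intro i hi
    rw [Finset.mem_Icc] at hi
    rw [hrp i hi.1 hi.2, gsc_e_int hα, gsc_e_mulpow hα]
  rw [hy', hprod, gsc_e_add hα, gsc_e_add hα]
  -- compute the total exponent
  have hS : (h : ZMod q) + (x : ZMod q) * rq 1 +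
      ∑ i ∈ Finset.Icc 1 (n - 1), (k i : ZMod q) * rq (i + 1)
      = (k n : ZMod q) * rlast := by
    rw [hrlast, ← mul_assoc, mul_inv_cancel₀ hkn, one_mul]
  have hE : (h : ZMod q) * t + (x : ZMod q) * (rq 1 * t) +
      ∑ i ∈ Finset.Icc 1 (n - 1), (k i : ZMod q) * (rq (i + 1) * t)
      = (k n : ZMod q) := by
    have hsum : ∑ i ∈ Finset.Icc 1 (n - 1), (k i : ZMod q) * (rq (i + 1) * t)
        = (∑ i ∈ Finset.Icc 1 (n - 1), (k i : ZMod q) * rq (i + 1)) * t := by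
      rw [Finset.sum_mul]; exact Finset.sum_congr rfl fun i _ => by ring
    rw [hsum, show (h : ZMod q) * t + (x : ZMod q) * (rq 1 * t) = ((h : ZMod q) + (x : ZMod q) * rq 1) * t by ring,
      ← add_mul, hS, mul_assoc, ht, mul_inv_cancel₀ hrlast0, mul_one]
  rw [hE, ← gsc_e_int hα, ← hrn, ← hrq]
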